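/- Let F be a hyperbolic m-dimensional LFT with parameter (i, σ, p⃗, q⃗), s = σ^{-1}(i), u = −ord_p(q_s), v = ord_p(p_s), and set ι(F) = p^{mv + (m+1)u − Σ_{t ≠ s} ord_p(p_t)}. Then for every n ≥ 1 and every a ∈ (pℤ_p)^m, μ_m(F^{-1}(a + (p^nℤ_p)^m)) = ι(F)^{-1} · μ_m(a + (p^nℤ_p)^m); consequently μ_m(F^{-1}(S)) = ι(F)^{-1} μ_m(S) for every Borel set S ⊆ (pℤ_p)^m. -/

import Mathlib

open MeasureTheory Filter Topology
open scoped Classical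

noncomputable section

namespace PadicCF

variable (p : ℕ) [Fact p.Prime]

/-- `pℤ_p`, the maximal ideal of the `p`-adic integers, viewed inside `ℚ_p`. -/
def pZ : Set ℚ_[p] := {x | ‖x‖ ≤ (p : ℝ)⁻¹}

/-- `D_m`: tuples `(x_1, …, x_m)` such that `1, x_1, …, x_m` are linearly
independent over `ℤ`. -/
def Dm (m : ℕ) : Set (Fin m → ℚ_[p]) :=
  {x | ∀ (c : ℤ) (a : Fin m → ℤ), (c : ℚ_[p]) + ∑ j, (a j : ℚ_[p]) * x j = 0 →
    c = 0 ∧ ∀ j, a j = 0}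

/-- `D_m' = D_m ∩ (pℤ_p)^m`. -/
def Dm' (m : ℕ) : Set (Fin m → ℚ_[p]) := {x | x ∈ Dm p m ∧ ∀ j, x j ∈ pZ p}

variable {m : ℕ}

/-- The `m`-dimensional linear fractional transformation with parameter `(i, σ, pv, qv)`. -/
def LFT (i : Fin m) (σ : Equiv.Perm (Fin m)) (pv qv : Fin m → ℚ)
    (x : Fin m → ℚ_[p]) : Fin m → ℚ_[p] := fun k =>
  if k = σ⁻¹ i then (pv k : ℚ_[p]) / x i - (qv k : ℚ_[p])
  else (pv k : ℚ_[p]) * x (σ k) / x i - (qv k : ℚ_[p])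

/-- The inverse of the LFT with parameter `(i, σ, pv, qv)`, given by the explicit formulas
`x_i = p_s/(y_s + q_s)` and `x_k = p_s (y_t + q_t) / (p_t (y_s + q_s))` for `k ≠ i`,
where `s = σ⁻¹ i`, `t = σ⁻¹ k`. -/
def LFTinv (i : Fin m) (σ : Equiv.Perm (Fin m)) (pv qv : Fin m → ℚ)
    (y : Fin m → ℚ_[p]) : Fin m → ℚ_[p] := fun k =>
  if k = i then (pv (σ⁻¹ i) : ℚ_[p]) / (y (σ⁻¹ i) + (qv (σ⁻¹ i) : ℚ_[p]))
  else (pv (σ⁻¹ i) : ℚ_[p]) * (y (σ⁻¹ k) + (qv (σ⁻¹ k) : ℚ_[p])) /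
        ((pv (σ⁻¹ k) : ℚ_[p]) * (y (σ⁻¹ i) + (qv (σ⁻¹ i) : ℚ_[p])))

/-- Hyperbolicity of an LFT, Definition 2.6 of the paper.  Here `ord` is `padicValRat p`;
the case `q_k = 0` (where `ord q_k = ∞` by convention) is listed explicitly in (iv). -/
def Hyperbolic (i : Fin m) (σ : Equiv.Perm (Fin m)) (pv qv : Fin m → ℚ) : Prop :=
  (∀ k, pv k ≠ 0 ∧ 0 ≤ padicValRat p (pv k)) ∧
  (qv (σ⁻¹ i) ≠ 0 ∧ padicValRat p (qv (σ⁻¹ i)) ≤ 0 ∧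
    0 < padicValRat p (pv (σ⁻¹ i) / qv (σ⁻¹ i))) ∧
  (∀ k, k ≠ σ⁻¹ i → qv k ≠ 0 → padicValRat p (qv k) ≤ 0 →
    padicValRat p (pv k / qv k) < padicValRat p (pv (σ⁻¹ i) / qv (σ⁻¹ i))) ∧
  (∀ k, k ≠ σ⁻¹ i → (qv k = 0 ∨ 0 < padicValRat p (qv k)) →
    padicValRat p (pv k) < padicValRat p (pv (σ⁻¹ i) / qv (σ⁻¹ i)))

/-- `F⁻¹(D_m')`, i.e. the image of `D_m'` under the (formula-defined) inverse of the LFT. -/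
def invImg (i : Fin m) (σ : Equiv.Perm (Fin m)) (pv qv : Fin m → ℚ) :
    Set (Fin m → ℚ_[p]) := LFTinv p i σ pv qv '' Dm' p m

/-- A family of hyperbolic LFTs indexed by `Λ` is an `m`-dimensional continued fraction
system if the sets `F_λ⁻¹(D_m')` form a partition of `D_m'`. -/
def IsCFSystem (m : ℕ) {Λ : Type*} (iF : Λ → Fin m) (σF : Λ → Equiv.Perm (Fin m))
    (pF qF : Λ → Fin m → ℚ) : Prop :=
  (∀ l, Hyperbolic p (iF l) (σF l) (pF l) (qF l)) ∧
  (⋃ l, invImg p (iF l) (σF l) (pF l) (qF l)) = Dm' p m ∧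
  (Pairwise fun l l' => Disjoint (invImg p (iF l) (σF l) (pF l) (qF l))
      (invImg p (iF l') (σF l') (pF l') (qF l')))

/-- The sup-norm `|z|_p = max_j |z_j|_p` on `ℚ_p^m`. -/
def supNorm (z : Fin m → ℚ_[p]) : NNReal := Finset.univ.sup fun j => ‖z j‖₊

/-- `v ∈ ℚ` is the integral part of `α ∈ ℚ_p` if it is of the form
`∑_{n=0}^{N} d_n p^{-n}` with digits `d_n ∈ {0, …, p-1}` and `α - v ∈ pℤ_p`. -/
def IsIntegralPart (α : ℚ_[p]) (v : ℚ) : Prop :=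
  (∃ N : ℕ, ∃ d : ℕ → ℕ, (∀ n, d n < p) ∧
      v = ∑ n ∈ Finset.range (N + 1), (d n : ℚ) / (p : ℚ) ^ n) ∧
  ‖α - (v : ℚ_[p])‖ ≤ (p : ℝ)⁻¹

/-- The integral part `⌊α⌋_p ∈ ℚ` of a `p`-adic number. -/
def padicFloor (α : ℚ_[p]) : ℚ :=
  if h : ∃ v : ℚ, IsIntegralPart p α v then h.choose else 0

/-- `J_N`: rationals `∑_{n=0}^{N} c_n p^{-n}` with digits `c_n ∈ {0,…,p-1}` and `c_N ≠ 0`. -/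
def Jset (N : ℕ) : Set ℚ :=
  {v | ∃ c : ℕ → ℕ, (∀ n, c n < p) ∧ c N ≠ 0 ∧
      v = ∑ n ∈ Finset.range (N + 1), (c n : ℚ) / (p : ℚ) ^ n}

/-- The exponent `k = max(ord_p x - ℓ, 0)`, with `k = 0` when `ℓ = ∞`. -/
def kexp (ℓ : ℕ∞) (x : ℚ_[p]) : ℤ :=
  if ℓ = ⊤ then 0 else max (x.valuation - ((WithTop.untopD 0 ℓ : ℕ) : ℤ)) 0

/-- The transformation `T_ℓ : pℤ_p → pℤ_p`, `T_ℓ(x) = p^k/x - ⌊p^k/x⌋_p` with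
`k = max(ord_p x - ℓ, 0)`, `T_ℓ(0) = 0`. -/
def Tell (ℓ : ℕ∞) (x : ℚ_[p]) : ℚ_[p] :=
  if x = 0 then 0
  else (p : ℚ_[p]) ^ kexp p ℓ x / x - (padicFloor p ((p : ℚ_[p]) ^ kexp p ℓ x / x) : ℚ_[p])

/-- The one-dimensional set `D_1' ⊆ pℤ_p` (elements of `pℤ_p` irrational over `ℤ`). -/
def D1 : Set ℚ_[p] :=
  {x | (∀ c a : ℤ, (c : ℚ_[p]) + (a : ℚ_[p]) * x = 0 → c = 0 ∧ a = 0) ∧ x ∈ pZ p}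

/-- Index set of the continued fraction system of `T_ℓ`:
pairs `(k, v)` with `k > 0, v ∈ J_ℓ`, or `k = 0` and `v ∈ J_1 ∪ ⋯ ∪ J_ℓ`. -/
def SysIndex (ℓ : ℕ∞) : Set (ℕ × ℚ) :=
  {kv | (0 < kv.1 ∧ ∃ n : ℕ, (n : ℕ∞) = ℓ ∧ kv.2 ∈ Jset p n) ∨
        (kv.1 = 0 ∧ ∃ n : ℕ, 1 ≤ n ∧ (n : ℕ∞) ≤ ℓ ∧ kv.2 ∈ Jset p n)}

/-- The exponent `r = max(-ℓ - ord_p(x_{k+1}) + ord_p(x_1), 0)` (`0` if `ℓ = ∞`). -/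
def rexp (ℓ : ℕ∞) (x1 xk : ℚ_[p]) : ℤ :=
  if ℓ = ⊤ then 0 else max (-((WithTop.untopD 0 ℓ : ℕ) : ℤ) - xk.valuation + x1.valuation) 0

/-- The multidimensional transformation `T_{ℓ,m}` on `D_m'`. -/
def Tellm (ℓ : ℕ∞) (x : Fin m → ℚ_[p]) : Fin m → ℚ_[p] := fun k =>
  if h : (k : ℕ) + 1 = m then Tell p ℓ (x ⟨0, k.pos⟩)
  else
    (p : ℚ_[p]) ^ rexp p ℓ (x ⟨0, k.pos⟩)
        (x ⟨(k : ℕ) + 1, lt_of_le_of_ne (Nat.succ_le_of_lt k.isLt) h⟩) *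
        x ⟨(k : ℕ) + 1, lt_of_le_of_ne (Nat.succ_le_of_lt k.isLt) h⟩ / x ⟨0, k.pos⟩ -
      (padicFloor p
        ((p : ℚ_[p]) ^ rexp p ℓ (x ⟨0, k.pos⟩)
            (x ⟨(k : ℕ) + 1, lt_of_le_of_ne (Nat.succ_le_of_lt k.isLt) h⟩) *
          x ⟨(k : ℕ) + 1, lt_of_le_of_ne (Nat.succ_le_of_lt k.isLt) h⟩ / x ⟨0, k.pos⟩) : ℚ_[p])

/-- The vector of powers `p⃗^{(ℓ,x)}` of Definition 3.13. -/
def pParam (ℓ : ℕ∞) (x : Fin m → ℚ_[p]) (k : Fin m) : ℚ :=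
  if ℓ = ⊤ then 1
  else if h : (k : ℕ) + 1 = m then
    (p : ℚ) ^ max (-((WithTop.untopD 0 ℓ : ℕ) : ℤ) + (x ⟨0, k.pos⟩).valuation) 0
  else
    (p : ℚ) ^ max (-((WithTop.untopD 0 ℓ : ℕ) : ℤ) -
      (x ⟨(k : ℕ) + 1, lt_of_le_of_ne (Nat.succ_le_of_lt k.isLt) h⟩).valuation +
      (x ⟨0, k.pos⟩).valuation) 0

/-- The vector `q⃗^{(ℓ,x)}` of Definition 3.13. -/
def qParam (ℓ : ℕ∞) (x : Fin m → ℚ_[p]) (k : Fin m) : ℚ :=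
  if h : (k : ℕ) + 1 = m then padicFloor p ((pParam p ℓ x k : ℚ_[p]) / x ⟨0, k.pos⟩)
  else padicFloor p ((pParam p ℓ x k : ℚ_[p]) *
    x ⟨(k : ℕ) + 1, lt_of_le_of_ne (Nat.succ_le_of_lt k.isLt) h⟩ / x ⟨0, k.pos⟩)

/-- The `j`-th convergent `π(α; j) = F⁻¹_{ψ_0} ∘ ⋯ ∘ F⁻¹_{ψ_j} (0̄)`. -/
def convergent (Finv : ℕ → (Fin m → ℚ_[p]) → Fin m → ℚ_[p]) (j : ℕ) : Fin m → ℚ_[p] :=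
  (List.range (j + 1)).foldr (fun t acc => Finv t acc) 0

/-- The exponent `h = max_k (ord_p(p_s) - ord_p(p_k))` of Section 5. -/
def hVal (i : Fin m) (σ : Equiv.Perm (Fin m)) (pv : Fin m → ℚ) : ℤ :=
  Finset.univ.sup' ⟨i, Finset.mem_univ i⟩
    fun k => padicValRat p (pv (σ⁻¹ i)) - padicValRat p (pv k)

/-- The cylinders `V_k^{(y)}` of Section 5. -/
def Vset (i : Fin m) (σ : Equiv.Perm (Fin m)) (pv qv : Fin m → ℚ) (n : ℕ)
    (a : Fin m → ℚ_[p]) (y : ℕ) (k : Fin m) : Set ℚ_[p] :=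
  if k = i then
    {t | ∃ w : ℚ_[p], ‖w‖ ≤ (p : ℝ) ^ (-(hVal p i σ pv)) ∧
      t = (pv (σ⁻¹ i) : ℚ_[p]) / (a (σ⁻¹ i) + (qv (σ⁻¹ i) : ℚ_[p])) +
        (p : ℚ_[p]) ^ ((n : ℤ) + padicValRat p (pv (σ⁻¹ i)) -
          2 * padicValRat p (qv (σ⁻¹ i))) * ((y : ℚ_[p]) + w)}
  else
    {t | ∃ w : ℚ_[p], ‖w‖ ≤ (p : ℝ) ^ (-(n : ℤ)) ∧
      t = ((pv (σ⁻¹ i) : ℚ_[p]) / (a (σ⁻¹ i) + (qv (σ⁻¹ i) : ℚ_[p])) +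
        (p : ℚ_[p]) ^ ((n : ℤ) + padicValRat p (pv (σ⁻¹ i)) -
          2 * padicValRat p (qv (σ⁻¹ i))) * (y : ℚ_[p])) *
        (a (σ⁻¹ k) + (qv (σ⁻¹ k) : ℚ_[p])) / (pv (σ⁻¹ k) : ℚ_[p])}

end PadicCF

namespace PadicCF

open MeasureTheory Filter Topology
open scoped ENNReal NNReal

variable (p : ℕ) [Fact p.Prime]


/-! ### Auxiliary lemmas -/

section Aux

lemma norm_ratCast_eq (q : ℚ) (hq : q ≠ 0) :
    ‖(q : ℚ_[p])‖ = (p : ℝ) ^ (-padicValRat p q) := by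
  rw [Padic.eq_padicNorm, padicNorm.eq_zpow_of_nonzero hq]; push_cast; ring

lemma one_lt_p : (1 : ℝ) < (p : ℝ) := by
  exact_mod_cast (Fact.out : p.Prime).one_lt

lemma p_pos : (0 : ℝ) < (p : ℝ) := lt_trans one_pos (one_lt_p p)

lemma ball_eq_closedBall (a : ℚ_[p]) (ρ : ℝ) :
    {x : ℚ_[p] | ‖x - a‖ ≤ ρ} = Metric.closedBall a ρ := by
  ext x; simp [Metric.mem_closedBall, dist_eq_norm]

lemma isClosed_ball (a : ℚ_[p]) (ρ : ℝ) : IsClosed {x : ℚ_[p] | ‖x - a‖ ≤ ρ} := by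
  rw [ball_eq_closedBall]; exact Metric.isClosed_closedBall

lemma isCompact_ball (a : ℚ_[p]) (ρ : ℝ) : IsCompact {x : ℚ_[p] | ‖x - a‖ ≤ ρ} := by
  rw [ball_eq_closedBall]; exact isCompact_closedBall a ρ

lemma measurableSet_ball [MeasurableSpace ℚ_[p]] [BorelSpace ℚ_[p]] (a : ℚ_[p]) (ρ : ℝ) :
    MeasurableSet {x : ℚ_[p] | ‖x - a‖ ≤ ρ} :=
  (isClosed_ball p a ρ).measurableSet

lemma isOpen_ball (a : ℚ_[p]) (r : ℤ) : IsOpen {x : ℚ_[p] | ‖x - a‖ ≤ (p : ℝ) ^ (-r)} := by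
  have : {x : ℚ_[p] | ‖x - a‖ ≤ (p : ℝ) ^ (-r)} = Metric.ball a ((p:ℝ) ^ (-r+1)) := by
    ext x
    simp only [Set.mem_setOf_eq, Metric.mem_ball, dist_eq_norm]
    constructor
    · intro h
      exact lt_of_le_of_lt h (zpow_lt_zpow_right₀ (one_lt_p p) (by omega))
    · intro h
      rcases eq_or_ne (x - a) 0 with h0 | h0
      · simp [h0]; positivity
      · obtain ⟨z, hz⟩ : ∃ z : ℤ, ‖x - a‖ = (p:ℝ) ^ z := by
          rcases Padic.padicNormE.image h0 with ⟨z, hz⟩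
          exact ⟨-z, by rw [hz]; push_cast; ring_nf⟩
        rw [hz] at h ⊢
        have := (zpow_lt_zpow_iff_right₀ (one_lt_p p)).mp h
        exact (zpow_le_zpow_iff_right₀ (one_lt_p p)).mpr (by omega)
  rw [this]; exact Metric.isOpen_ball

lemma perm_inv_apply_self {α : Type*} (σ : Equiv.Perm α) (x : α) : σ⁻¹ (σ x) = x :=
  Equiv.Perm.inv_eq_iff_eq.mpr rfl

lemma perm_apply_inv_self {α : Type*} (σ : Equiv.Perm α) (x : α) : σ (σ⁻¹ x) = x :=
  (Equiv.eq_symm_apply σ).mp rfl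

end Aux

section BallMeasure

variable [MeasurableSpace ℚ_[p]] [BorelSpace ℚ_[p]]
variable (μ : Measure ℚ_[p]) [μ.IsAddHaarMeasure]

lemma measure_ball_translate (a : ℚ_[p]) (ρ : ℝ) :
    μ {x : ℚ_[p] | ‖x - a‖ ≤ ρ} = μ {x : ℚ_[p] | ‖x‖ ≤ ρ} := by
  have : {x : ℚ_[p] | ‖x - a‖ ≤ ρ} = (fun x => -a + x) ⁻¹' {x : ℚ_[p] | ‖x‖ ≤ ρ} := by
    ext x; simp [neg_add_eq_sub]
  rw [this, measure_preimage_add]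

lemma measure_ball_step (r : ℤ) :
    μ {x : ℚ_[p] | ‖x‖ ≤ (p : ℝ) ^ (-r)} =
      p * μ {x : ℚ_[p] | ‖x‖ ≤ (p : ℝ) ^ (-(r+1))} := by
  classical
  have hp1 : (1:ℝ) < p := one_lt_p p
  set c : ℕ → ℚ_[p] := fun j => (j : ℚ_[p]) * (p : ℚ_[p]) ^ r with hc
  have hnormp : ‖(p : ℚ_[p]) ^ r‖ = (p : ℝ) ^ (-r) := by
    rw [norm_zpow, Padic.norm_p]; rw [← zpow_neg_one, ← zpow_mul]; ring_nf
  -- decomposition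
  have hdecomp : {x : ℚ_[p] | ‖x‖ ≤ (p : ℝ) ^ (-r)} =
      ⋃ j ∈ Finset.range p, {x : ℚ_[p] | ‖x - c j‖ ≤ (p : ℝ) ^ (-(r+1))} := by
    ext x
    simp only [Set.mem_setOf_eq, Set.mem_iUnion, Finset.mem_range, exists_prop]
    constructor
    · intro hx
      have hu : ‖x * (p : ℚ_[p]) ^ (-r)‖ ≤ 1 := by
        rw [norm_mul, norm_zpow, Padic.norm_p, ← zpow_neg_one, ← zpow_mul]
        calc ‖x‖ * (p:ℝ) ^ (-1 * -r) ≤ (p:ℝ)^(-r) * (p:ℝ)^(r) := by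
              apply mul_le_mul hx (by ring_nf; exact le_refl _) (by positivity) (by positivity)
          _ = 1 := by rw [← zpow_add₀ (by positivity : (p:ℝ) ≠ 0)]; simp
      set z : ℤ_[p] := ⟨x * (p : ℚ_[p]) ^ (-r), hu⟩ with hz
      refine ⟨z.appr 1, by simpa using z.appr_lt 1, ?_⟩
      have hspec : ‖z - (z.appr 1 : ℤ_[p])‖ ≤ (p : ℝ) ^ (-(1:ℕ) : ℤ) :=
        (PadicInt.norm_le_pow_iff_mem_span_pow _ 1).mpr (by simpa using z.appr_spec 1)
      have hcoe : ‖x * (p : ℚ_[p]) ^ (-r) - (z.appr 1 : ℚ_[p])‖ ≤ (p:ℝ)^(-(1:ℤ)) := by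
        have heq : ((z - (z.appr 1 : ℤ_[p]) : ℤ_[p]) : ℚ_[p]) =
            x * (p : ℚ_[p]) ^ (-r) - (z.appr 1 : ℚ_[p]) := by
          rw [PadicInt.coe_sub, PadicInt.coe_natCast]
        rw [← heq, PadicInt.padic_norm_e_of_padicInt]
        simpa using hspec
      have hxc : x - c (z.appr 1) = (x * (p : ℚ_[p]) ^ (-r) - (z.appr 1 : ℚ_[p])) *
          (p : ℚ_[p]) ^ r := by
        have hpne : (p : ℚ_[p]) ≠ 0 := by
          exact_mod_cast (Nat.cast_ne_zero (R := ℚ_[p])).mpr (Fact.out : p.Prime).ne_zero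
        rw [sub_mul, mul_assoc, ← zpow_add₀ hpne, neg_add_cancel, zpow_zero, mul_one, hc]
      rw [hxc, norm_mul, hnormp]
      calc ‖x * (p : ℚ_[p]) ^ (-r) - ((z.appr 1 : ℕ) : ℚ_[p])‖ * (p:ℝ) ^ (-r)
          ≤ (p:ℝ)^(-(1:ℤ)) * (p:ℝ)^(-r) := by
            apply mul_le_mul_of_nonneg_right hcoe (by positivity)
        _ = (p:ℝ) ^ (-(r+1)) := by rw [← zpow_add₀ (by positivity : (p:ℝ) ≠ 0)]; ring_nf
    · rintro ⟨j, hj, hxj⟩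
      have hcj : ‖c j‖ ≤ (p:ℝ) ^ (-r) := by
        rw [hc, norm_mul, hnormp]
        have : ‖(j : ℚ_[p])‖ ≤ 1 := by
          have := Padic.norm_int_le_one (p := p) (j : ℤ)
          simpa using this
        nlinarith [zpow_pos (p_pos p) (-r)]
      calc ‖x‖ = ‖(x - c j) + c j‖ := by ring_nf
        _ ≤ max ‖x - c j‖ ‖c j‖ := Padic.nonarchimedean _ _
        _ ≤ (p:ℝ) ^ (-r) := max_le
            (le_trans hxj (zpow_le_zpow_right₀ (le_of_lt hp1) (by omega))) hcj
  -- disjointness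
  have hdisj : (↑(Finset.range p) : Set ℕ).PairwiseDisjoint
      (fun j => {x : ℚ_[p] | ‖x - c j‖ ≤ (p : ℝ) ^ (-(r+1))}) := by
    intro j hj k hk hjk
    simp only [Finset.coe_range, Set.mem_Iio] at hj hk
    simp only [Function.onFun]
    rw [Set.disjoint_left]
    intro x hxj hxk
    simp only [Set.mem_setOf_eq] at hxj hxk
    have hne : ‖c j - c k‖ = (p:ℝ) ^ (-r) := by
      have hjk' : ((j : ℤ) - k) ≠ 0 := by
        simpa [sub_eq_zero] using fun h => hjk (by exact_mod_cast h)
      have hint : ‖((j - k : ℤ) : ℚ_[p])‖ = 1 := by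
        refine le_antisymm (Padic.norm_int_le_one _) ?_
        by_contra hlt
        push_neg at hlt
        have := (Padic.norm_intCast_lt_one_iff (k := (j:ℤ) - k)).mp hlt
        rcases this with ⟨d, hd⟩
        have : (p : ℤ) ∣ (j:ℤ) - k := ⟨d, hd⟩
        have habs : ((j:ℤ) - k).natAbs < p := by omega
        have := Int.natAbs_dvd_natAbs.mpr this
        simp only [Int.natAbs_natCast] at this
        have hpos : 0 < ((j:ℤ) - k).natAbs := Int.natAbs_pos.mpr hjk'
        exact absurd (Nat.le_of_dvd hpos this) (by omega)
      have : c j - c k = (((j:ℤ) - k : ℤ) : ℚ_[p]) * (p : ℚ_[p]) ^ r := by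
        rw [hc]; push_cast; ring
      rw [this, norm_mul, hint, hnormp, one_mul]
    have hle : ‖c j - c k‖ ≤ (p:ℝ) ^ (-(r+1)) := by
      calc ‖c j - c k‖ = ‖(c j - x) + (x - c k)‖ := by ring_nf
        _ ≤ max ‖c j - x‖ ‖x - c k‖ := Padic.nonarchimedean _ _
        _ ≤ (p:ℝ) ^ (-(r+1)) := max_le (by rwa [norm_sub_rev]) hxk
    rw [hne] at hle
    exact absurd hle (not_le.mpr (zpow_lt_zpow_right₀ hp1 (by omega)))
  rw [hdecomp, measure_biUnion_finset hdisj
    (fun j _ => measurableSet_ball p _ _)]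
  have : ∀ j ∈ Finset.range p, μ {x : ℚ_[p] | ‖x - c j‖ ≤ (p : ℝ) ^ (-(r+1))} =
      μ {x : ℚ_[p] | ‖x‖ ≤ (p : ℝ) ^ (-(r+1))} := fun j _ => measure_ball_translate p μ _ _
  rw [Finset.sum_congr rfl this, Finset.sum_const, Finset.card_range, nsmul_eq_mul]

lemma measure_ball_int (hμ : μ (pZ p) = 1) (r : ℤ) (a : ℚ_[p]) :
    μ {x : ℚ_[p] | ‖x - a‖ ≤ (p : ℝ) ^ (-r)} = (p : ℝ≥0∞) ^ (1 - r) := by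
  rw [measure_ball_translate]
  have hp0 : (p : ℝ≥0∞) ≠ 0 := by
    exact_mod_cast Nat.cast_ne_zero.mpr (Fact.out : p.Prime).ne_zero
  have hpt : (p : ℝ≥0∞) ≠ ⊤ := ENNReal.natCast_ne_top p
  have hB1 : μ {x : ℚ_[p] | ‖x‖ ≤ (p : ℝ) ^ (-(1:ℤ))} = 1 := by
    have : {x : ℚ_[p] | ‖x‖ ≤ (p : ℝ) ^ (-(1:ℤ))} = pZ p := by
      ext x; simp [pZ, zpow_neg_one]
    rwa [this]
  have hmul : ∀ s t : ℤ, (p:ℝ≥0∞)^s * (p:ℝ≥0∞)^t = (p:ℝ≥0∞)^(s+t) :=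
    fun s t => (ENNReal.zpow_add hp0 hpt s t).symm
  have hmul1 : ∀ t : ℤ, (p:ℝ≥0∞) * (p:ℝ≥0∞)^t = (p:ℝ≥0∞)^(1+t) := by
    intro t
    have := hmul 1 t
    rwa [zpow_one] at this
  induction r using Int.induction_on with
  | zero =>
      have h := measure_ball_step p μ 0
      rw [zero_add, hB1, mul_one] at h
      rw [h]; simp
  | succ k ih =>
      have h := measure_ball_step p μ k
      rw [ih] at h
      have h2 : (p:ℝ≥0∞) * μ {x : ℚ_[p] | ‖x‖ ≤ (p : ℝ) ^ (-((k:ℤ)+1))} =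
          (p:ℝ≥0∞) * (p:ℝ≥0∞) ^ (1 - ((k:ℤ)+1)) := by
        rw [← h, hmul1]
        congr 1
        ring
      exact (ENNReal.mul_right_inj hp0 hpt).mp h2
  | pred k ih =>
      have h := measure_ball_step p μ (-(k:ℤ) - 1)
      rw [show (-(k:ℤ) - 1 + 1) = -(k:ℤ) by ring, ih, hmul1] at h
      rw [h]
      congr 1
      ring

end BallMeasure
section Shear

lemma prod_zpow {ι : Type*} (x : ℝ≥0∞) (hx : x ≠ 0) (ht : x ≠ ⊤) (s : Finset ι) (f : ι → ℤ) :
    ∏ j ∈ s, x ^ f j = x ^ (∑ j ∈ s, f j) := by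
  induction s using Finset.cons_induction with
  | empty => simp
  | cons a s ha ih => rw [Finset.prod_cons, Finset.sum_cons, ih, ENNReal.zpow_add hx ht]

variable {m : ℕ}

lemma shear_preserving [MeasurableSpace ℚ_[p]] [BorelSpace ℚ_[p]]
    (μ : Measure ℚ_[p]) [μ.IsAddHaarMeasure] [SigmaFinite μ] (hμ : μ (pZ p) = 1)
    (c : Fin m → ℚ_[p]) (i : Fin m) (hci : c i = 0)
    (S : Set (Fin m → ℚ_[p])) (hS : MeasurableSet S) :
    (Measure.pi fun _ : Fin m => μ) ((fun x k => x k - c k * x i) ⁻¹' S) =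
      (Measure.pi fun _ : Fin m => μ) S := by
  classical
  set ψ : (Fin m → ℚ_[p]) ≃+ (Fin m → ℚ_[p]) :=
    { toFun := fun x k => x k - c k * x i
      invFun := fun x k => x k + c k * x i
      left_inv := by
        intro x; funext k
        show (x k - c k * x i) + c k * (x i - c i * x i) = x k
        rw [hci]; ring
      right_inv := by
        intro x; funext k
        show (x k + c k * x i) - c k * (x i + c i * x i) = x k
        rw [hci]; ring
      map_add' := by
        intro x y; funext k
        show (x + y) k - c k * (x + y) i = (x k - c k * x i) + (y k - c k * y i)
        simp only [Pi.add_apply]; ring } with hψ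
  have hψdef : ⇑ψ = fun x k => x k - c k * x i := rfl
  have hcont : Continuous ⇑ψ := by
    rw [hψdef]
    exact continuous_pi fun k =>
      (continuous_apply k).sub (continuous_const.mul (continuous_apply i))
  have hconts : Continuous ⇑ψ.symm := by
    have : ⇑ψ.symm = fun (x : Fin m → ℚ_[p]) k => x k + c k * x i := rfl
    rw [this]
    exact continuous_pi fun k =>
      (continuous_apply k).add (continuous_const.mul (continuous_apply i))
  set μm := Measure.pi fun _ : Fin m => μ with hμm
  have hHaar : (Measure.map (⇑ψ) μm).IsAddHaarMeasure :=
    AddEquiv.isAddHaarMeasure_map μm ψ hcont hconts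
  have huniq := Measure.isAddLeftInvariant_eq_smul (Measure.map (⇑ψ) μm) μm
  -- test cube
  have hex : ∀ k, ∃ n : ℕ, ‖c k‖ ≤ (p:ℝ) ^ (n : ℤ) := by
    intro k
    obtain ⟨n, hn⟩ := pow_unbounded_of_one_lt ‖c k‖ (one_lt_p p)
    exact ⟨n, by rw [zpow_natCast]; exact hn.le⟩
  choose e he using hex
  set g : Fin m → ℤ := fun k => if k = i then 0 else (e k : ℤ) with hg
  set K : Set (Fin m → ℚ_[p]) :=
    Set.univ.pi fun k => {t : ℚ_[p] | ‖t - 0‖ ≤ (p:ℝ) ^ (-(-(g k)))} with hK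
  have hgi : g i = 0 := by rw [hg]; simp
  have hbound : ∀ x : Fin m → ℚ_[p], ‖x i‖ ≤ 1 → ∀ k, ‖c k * x i‖ ≤ (p:ℝ) ^ (-(-(g k))) := by
    intro x hxi k
    rcases eq_or_ne k i with rfl | hki
    · rw [hci]; simp; positivity
    · have : g k = (e k : ℤ) := by rw [hg]; simp [hki]
      rw [this, neg_neg, norm_mul]
      calc ‖c k‖ * ‖x i‖ ≤ (p:ℝ) ^ (e k : ℤ) * 1 :=
            mul_le_mul (he k) hxi (norm_nonneg _) (by positivity)
        _ = (p:ℝ) ^ (e k : ℤ) := mul_one _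
  have hψK : ⇑ψ ⁻¹' K = K := by
    ext x
    rw [hψdef]
    simp only [Set.mem_preimage, hK, Set.mem_univ_pi, Set.mem_setOf_eq]
    constructor
    · intro h k
      have hi : ‖x i‖ ≤ 1 := by
        have := h i
        rw [hci, hgi] at this
        simpa using this
      have h1 := h k
      calc ‖x k - 0‖ = ‖(x k - c k * x i - 0) + c k * x i‖ := by ring_nf
        _ ≤ max ‖x k - c k * x i - 0‖ ‖c k * x i‖ := Padic.nonarchimedean _ _
        _ ≤ (p:ℝ) ^ (-(-(g k))) := max_le h1 (hbound x hi k)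
    · intro h k
      have hi : ‖x i‖ ≤ 1 := by
        have := h i
        rw [hgi] at this
        simpa using this
      have h1 := h k
      calc ‖x k - c k * x i - 0‖ = ‖(x k - 0) + (-(c k * x i))‖ := by ring_nf
        _ ≤ max ‖x k - 0‖ ‖-(c k * x i)‖ := Padic.nonarchimedean _ _
        _ ≤ (p:ℝ) ^ (-(-(g k))) := max_le h1 (by rw [norm_neg]; exact hbound x hi k)
  have hKmeas : MeasurableSet K :=
    MeasurableSet.univ_pi fun k => measurableSet_ball p 0 _
  have hp0 : (p : ℝ≥0∞) ≠ 0 := by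
    exact_mod_cast Nat.cast_ne_zero.mpr (Fact.out : p.Prime).ne_zero
  have hpt : (p : ℝ≥0∞) ≠ ⊤ := ENNReal.natCast_ne_top p
  have hKval : μm K = ∏ k : Fin m, (p:ℝ≥0∞) ^ ((1:ℤ) - -(g k)) := by
    rw [hμm, hK, Measure.pi_pi]
    exact Finset.prod_congr rfl fun k _ => measure_ball_int p μ hμ _ 0
  have hK0 : μm K ≠ 0 := by
    rw [hKval, prod_zpow _ hp0 hpt]
    exact (ENNReal.zpow_pos hp0 hpt _).ne'
  have hKtop : μm K ≠ ⊤ := by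
    rw [hKval, prod_zpow _ hp0 hpt]
    exact (ENNReal.zpow_lt_top hp0 hpt _).ne
  have hKeq : Measure.map (⇑ψ) μm K = μm K := by
    rw [Measure.map_apply hcont.measurable hKmeas, hψK]
  obtain ⟨s0, hs0⟩ : ∃ s0 : ℝ≥0, Measure.map (⇑ψ) μm = s0 • μm := ⟨_, huniq⟩
  rw [hs0] at hKeq
  simp only [Measure.smul_apply, ENNReal.smul_def, smul_eq_mul] at hKeq
  have hs : ((s0 : ℝ≥0) : ℝ≥0∞) = 1 := by
    have h2 : ((s0 : ℝ≥0) : ℝ≥0∞) * μm K = 1 * μm K := by rw [one_mul, hKeq]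
    exact (ENNReal.mul_left_inj hK0 hKtop).mp h2
  have hfin : Measure.map (⇑ψ) μm S = μm S := by
    rw [hs0]
    simp only [Measure.smul_apply, ENNReal.smul_def, smul_eq_mul, hs, one_mul]
  rw [Measure.map_apply hcont.measurable hS, hψdef] at hfin
  exact hfin

end Shear
section ImageCube

lemma pzpow_bound (x : ℝ) (α β n' : ℤ) (hxle : x ≤ (p:ℝ)^n') :
    (p:ℝ)^α * x / (p:ℝ)^β ≤ (p:ℝ)^(α + n' - β) := by
  have hp0 : (0:ℝ) < p := p_pos p
  have h1 : (p:ℝ)^α * x / (p:ℝ)^β ≤ (p:ℝ)^α * (p:ℝ)^n' / (p:ℝ)^β := by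
    gcongr
  refine le_trans h1 (le_of_eq ?_)
  rw [← zpow_add₀ (ne_of_gt hp0), ← zpow_sub₀ (ne_of_gt hp0)]

variable {m : ℕ}

lemma image_cube_eq (i : Fin m) (σ : Equiv.Perm (Fin m)) (pv qv : Fin m → ℚ)
    (hF : Hyperbolic p i σ pv qv) (n : ℕ) (hn : 1 ≤ n)
    (a : Fin m → ℚ_[p]) (ha : ∀ j, a j ∈ pZ p) :
    LFTinv p i σ pv qv '' {x | ∀ j, ‖x j - a j‖ ≤ (p : ℝ) ^ (-(n : ℤ))} =
      (fun (x : Fin m → ℚ_[p]) k => x k -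
        (if k = i then 0
          else (a (σ⁻¹ k) + (qv (σ⁻¹ k) : ℚ_[p])) / (pv (σ⁻¹ k) : ℚ_[p])) * x i) ⁻¹'
      Set.univ.pi (fun k => if k = i
        then {t : ℚ_[p] |
          ‖t - (pv (σ⁻¹ i) : ℚ_[p]) / (a (σ⁻¹ i) + (qv (σ⁻¹ i) : ℚ_[p]))‖ ≤
            (p:ℝ) ^ (-((n:ℤ) + padicValRat p (pv (σ⁻¹ i)) + 2 * -padicValRat p (qv (σ⁻¹ i))))}
        else {t : ℚ_[p] | ‖t - 0‖ ≤
          (p:ℝ) ^ (-((n:ℤ) + -padicValRat p (qv (σ⁻¹ i)) + padicValRat p (pv (σ⁻¹ i))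
            - padicValRat p (pv (σ⁻¹ k))))}) := by
  classical
  set s : Fin m := σ⁻¹ i with hs_def
  set u : ℤ := -padicValRat p (qv s) with hu_def
  set v : ℤ := padicValRat p (pv s) with hv_def
  obtain ⟨hP, hQ, -, -⟩ := hF
  have hp1 : (1:ℝ) < p := one_lt_p p
  have hppos : (0:ℝ) < p := p_pos p
  have hpne : (p:ℝ) ≠ 0 := ne_of_gt hppos
  have hps0 : ∀ k, (pv k : ℚ_[p]) ≠ 0 := fun k => by
    exact_mod_cast Rat.cast_ne_zero.mpr (hP k).1
  have hu0 : (0:ℤ) ≤ u := by rw [hu_def]; exact neg_nonneg.mpr hQ.2.1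
  have hv0 : (0:ℤ) ≤ v := (hP s).2
  have hQn : ‖(qv s : ℚ_[p])‖ = (p:ℝ) ^ u := norm_ratCast_eq p _ hQ.1
  have hPn : ∀ k, ‖(pv k : ℚ_[p])‖ = (p:ℝ) ^ (-padicValRat p (pv k)) := fun k =>
    norm_ratCast_eq p _ (hP k).1
  have hPsn : ‖(pv s : ℚ_[p])‖ = (p:ℝ) ^ (-v) := hPn s
  have hden : ∀ y : ℚ_[p], ‖y‖ ≤ (p:ℝ)⁻¹ → ‖y + (qv s : ℚ_[p])‖ = (p:ℝ) ^ u := by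
    intro y hy
    have h1 : ‖y‖ < ‖(qv s : ℚ_[p])‖ := by
      rw [hQn]
      calc ‖y‖ ≤ (p:ℝ)⁻¹ := hy
        _ < 1 := inv_lt_one_of_one_lt₀ hp1
        _ ≤ (p:ℝ) ^ u := by
            calc (1:ℝ) = (p:ℝ) ^ (0:ℤ) := (zpow_zero _).symm
              _ ≤ (p:ℝ) ^ u := zpow_le_zpow_right₀ hp1.le hu0
    rw [Padic.add_eq_max_of_ne (ne_of_lt h1), max_eq_right h1.le, hQn]
  have hdenne : ∀ y : ℚ_[p], ‖y‖ ≤ (p:ℝ)⁻¹ → y + (qv s : ℚ_[p]) ≠ 0 := by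
    intro y hy h0
    have h2 := hden y hy
    rw [h0, norm_zero] at h2
    exact absurd h2.symm (ne_of_gt (zpow_pos hppos u))
  have hsmall : ∀ (y : Fin m → ℚ_[p]), (∀ j, ‖y j - a j‖ ≤ (p:ℝ) ^ (-(n:ℤ))) →
      ∀ j, ‖y j‖ ≤ (p:ℝ)⁻¹ := by
    intro y hy j
    have h2 : ‖y j - a j‖ ≤ (p:ℝ)⁻¹ := by
      refine le_trans (hy j) ?_
      rw [← zpow_neg_one]
      exact zpow_le_zpow_right₀ hp1.le (by omega)
    calc ‖y j‖ = ‖(y j - a j) + a j‖ := by ring_nf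
      _ ≤ max ‖y j - a j‖ ‖a j‖ := Padic.nonarchimedean _ _
      _ ≤ (p:ℝ)⁻¹ := max_le h2 (ha j)
  have has : ‖a s + (qv s : ℚ_[p])‖ = (p:ℝ) ^ u := hden _ (ha s)
  have hasne : a s + (qv s : ℚ_[p]) ≠ 0 := hdenne _ (ha s)
  set c0 : ℚ_[p] := (pv s : ℚ_[p]) / (a s + (qv s : ℚ_[p])) with hc0_def
  have hc0n : ‖c0‖ = (p:ℝ) ^ (-(u+v)) := by
    rw [hc0_def, norm_div, hPsn, has, ← zpow_sub₀ hpne]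
    congr 1; ring
  have hxin : ∀ x : ℚ_[p], ‖x - c0‖ ≤ (p:ℝ) ^ (-((n:ℤ) + v + 2*u)) →
      ‖x‖ = (p:ℝ) ^ (-(u+v)) := by
    intro x hx
    have hlt : ‖x - c0‖ < ‖c0‖ := by
      refine lt_of_le_of_lt hx ?_
      rw [hc0n]
      exact zpow_lt_zpow_right₀ hp1 (by omega)
    calc ‖x‖ = ‖(x - c0) + c0‖ := by ring_nf
      _ = max ‖x - c0‖ ‖c0‖ := Padic.add_eq_max_of_ne (ne_of_lt hlt)
      _ = ‖c0‖ := max_eq_right hlt.le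
      _ = _ := hc0n
  ext x
  simp only [Set.mem_image, Set.mem_setOf_eq, Set.mem_preimage, Set.mem_univ_pi]
  constructor
  · rintro ⟨y, hy, rfl⟩
    intro k
    have hys : ‖y s + (qv s : ℚ_[p])‖ = (p:ℝ) ^ u := hden _ (hsmall y hy s)
    have hysne : y s + (qv s : ℚ_[p]) ≠ 0 := hdenne _ (hsmall y hy s)
    by_cases hk : k = i
    · subst hk
      simp only [LFTinv, eq_self_iff_true, if_true, zero_mul, sub_zero, Set.mem_setOf_eq]
      rw [← hs_def]
      have hid : (pv s : ℚ_[p]) / (y s + (qv s:ℚ_[p])) - c0 =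
          (pv s : ℚ_[p]) * (a s - y s) / ((y s + (qv s:ℚ_[p])) * (a s + (qv s:ℚ_[p]))) := by
        rw [hc0_def]
        field_simp
        ring
      rw [hid, norm_div, norm_mul, norm_mul, hPsn, hys, has, ← zpow_add₀ hpne]
      have hb : ‖a s - y s‖ ≤ (p:ℝ) ^ (-(n:ℤ)) := by rw [norm_sub_rev]; exact hy s
      refine le_trans (pzpow_bound p _ _ _ _ hb) (le_of_eq ?_)
      congr 1; ring
    · simp only [LFTinv, if_neg hk, eq_self_iff_true, if_true, Set.mem_setOf_eq]
      rw [sub_zero, ← hs_def]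
      have hid : (pv s:ℚ_[p]) * (y (σ⁻¹ k) + (qv (σ⁻¹ k):ℚ_[p])) /
            ((pv (σ⁻¹ k):ℚ_[p]) * (y s + (qv s:ℚ_[p])))
          - (a (σ⁻¹ k) + (qv (σ⁻¹ k):ℚ_[p])) / (pv (σ⁻¹ k):ℚ_[p]) *
            ((pv s:ℚ_[p]) / (y s + (qv s:ℚ_[p])))
          = (pv s:ℚ_[p]) * (y (σ⁻¹ k) - a (σ⁻¹ k)) /
            ((pv (σ⁻¹ k):ℚ_[p]) * (y s + (qv s:ℚ_[p]))) := by
        field_simp [hysne, hps0 (σ⁻¹ k)]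
        ring
      rw [hid, norm_div, norm_mul, norm_mul, hPsn, hys, hPn (σ⁻¹ k), ← zpow_add₀ hpne]
      have hb : ‖y (σ⁻¹ k) - a (σ⁻¹ k)‖ ≤ (p:ℝ) ^ (-(n:ℤ)) := hy _
      refine le_trans (pzpow_bound p _ _ _ _ hb) (le_of_eq ?_)
      congr 1; ring
  · intro hx
    have hxi : ‖x i - c0‖ ≤ (p:ℝ) ^ (-((n:ℤ) + v + 2*u)) := by
      have h1 := hx i
      simp only [eq_self_iff_true, if_true, zero_mul, sub_zero, Set.mem_setOf_eq] at h1
      exact h1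
    have hxinorm : ‖x i‖ = (p:ℝ) ^ (-(u+v)) := hxin _ hxi
    have hxine : x i ≠ 0 := by
      intro h0
      rw [h0, norm_zero] at hxinorm
      exact absurd hxinorm.symm (ne_of_gt (zpow_pos hppos _))
    set y : Fin m → ℚ_[p] := fun t => if t = s then (pv s:ℚ_[p]) / x i - (qv s:ℚ_[p])
      else (pv t:ℚ_[p]) * x (σ t) / x i - (qv t:ℚ_[p]) with hy_def
    have hys_eq : y s = (pv s:ℚ_[p]) / x i - (qv s:ℚ_[p]) := by rw [hy_def]; simp
    have hyt_eq : ∀ t, t ≠ s → y t = (pv t:ℚ_[p]) * x (σ t) / x i - (qv t:ℚ_[p]) := by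
      intro t ht; rw [hy_def]; simp [ht]
    have hxk : ∀ k, k ≠ i →
        ‖x k - (a (σ⁻¹ k) + (qv (σ⁻¹ k):ℚ_[p])) / (pv (σ⁻¹ k):ℚ_[p]) * x i‖ ≤
        (p:ℝ) ^ (-((n:ℤ) + u + v - padicValRat p (pv (σ⁻¹ k)))) := by
      intro k hk
      have h1 := hx k
      rw [if_neg hk, if_neg hk, Set.mem_setOf_eq, sub_zero] at h1
      exact h1
    refine ⟨y, ?_, ?_⟩
    · intro j
      by_cases hj : j = s
      · rw [hj, hys_eq]
        have hid : (pv s:ℚ_[p]) / x i - (qv s:ℚ_[p]) - a s =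
            (a s + (qv s:ℚ_[p])) * (c0 - x i) / x i := by
          rw [hc0_def]
          field_simp [hxine, hasne]
          ring
        rw [hid, norm_div, norm_mul, has, hxinorm]
        have hb : ‖c0 - x i‖ ≤ (p:ℝ)^(-((n:ℤ)+v+2*u)) := by rw [norm_sub_rev]; exact hxi
        refine le_trans (pzpow_bound p _ _ _ _ hb) (le_of_eq ?_)
        congr 1; ring
      · rw [hyt_eq j hj]
        have hk : σ j ≠ i := by
          intro h
          exact hj (by rw [hs_def, ← h, perm_inv_apply_self])
        have hxkj := hxk (σ j) hk
        rw [perm_inv_apply_self] at hxkj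
        have hid : (pv j:ℚ_[p]) * x (σ j) / x i - (qv j:ℚ_[p]) - a j =
            (pv j:ℚ_[p]) * (x (σ j) - (a j + (qv j:ℚ_[p])) / (pv j:ℚ_[p]) * x i) / x i := by
          field_simp [hxine, hps0 j]
          ring
        rw [hid, norm_div, norm_mul, hPn j, hxinorm]
        refine le_trans (pzpow_bound p _ _ _ _ hxkj) (le_of_eq ?_)
        congr 1; ring
    · funext k
      by_cases hk : k = i
      · rw [hk]
        simp only [LFTinv, eq_self_iff_true, if_true]
        rw [← hs_def]
        have h1 : y s + (qv s:ℚ_[p]) = (pv s:ℚ_[p]) / x i := by rw [hys_eq]; ring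
        rw [h1]
        field_simp [hxine, hps0 s]
      · simp only [LFTinv, if_neg hk]
        rw [← hs_def]
        have hts : σ⁻¹ k ≠ s := by
          intro h
          apply hk
          have h2 : k = σ (σ⁻¹ k) := (perm_apply_inv_self σ k).symm
          rw [h2, h, hs_def, perm_apply_inv_self]
        have h1 : y s + (qv s:ℚ_[p]) = (pv s:ℚ_[p]) / x i := by rw [hys_eq]; ring
        have h2 : y (σ⁻¹ k) + (qv (σ⁻¹ k):ℚ_[p]) = (pv (σ⁻¹ k):ℚ_[p]) * x k / x i := by
          rw [hyt_eq (σ⁻¹ k) hts, perm_apply_inv_self]; ring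
        rw [h1, h2, div_eq_iff (mul_ne_zero (hps0 (σ⁻¹ k)) (div_ne_zero (hps0 s) hxine))]
        field_simp

end ImageCube
section Part1

lemma measure_pi_cylinder [MeasurableSpace ℚ_[p]] [BorelSpace ℚ_[p]]
    (μ : Measure ℚ_[p]) [μ.IsAddHaarMeasure] [SigmaFinite μ] (hμ : μ (pZ p) = 1)
    {m : ℕ} (i : Fin m) (b : ℚ_[p]) (r0 : ℤ) (r : Fin m → ℤ) :
    (Measure.pi fun _ : Fin m => μ)
      (Set.univ.pi fun k => if k = i then {t : ℚ_[p] | ‖t - b‖ ≤ (p:ℝ) ^ (-r0)}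
        else {t : ℚ_[p] | ‖t - 0‖ ≤ (p:ℝ) ^ (-(r k))}) =
      (p:ℝ≥0∞) ^ ((1 - r0) + ∑ k ∈ Finset.univ.erase i, (1 - r k)) := by
  classical
  have hp0 : (p : ℝ≥0∞) ≠ 0 := by
    exact_mod_cast Nat.cast_ne_zero.mpr (Fact.out : p.Prime).ne_zero
  have hpt : (p : ℝ≥0∞) ≠ ⊤ := ENNReal.natCast_ne_top p
  have hfac : ∀ k : Fin m,
      μ (if k = i then {t : ℚ_[p] | ‖t - b‖ ≤ (p:ℝ) ^ (-r0)}
        else {t : ℚ_[p] | ‖t - 0‖ ≤ (p:ℝ) ^ (-(r k))}) =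
      (p:ℝ≥0∞) ^ (if k = i then 1 - r0 else 1 - r k) := by
    intro k
    by_cases hk : k = i
    · rw [if_pos hk, if_pos hk]
      exact measure_ball_int p μ hμ r0 b
    · rw [if_neg hk, if_neg hk]
      exact measure_ball_int p μ hμ (r k) 0
  rw [Measure.pi_pi]
  refine Eq.trans (Finset.prod_congr rfl fun k _ => hfac k) ?_
  rw [prod_zpow _ hp0 hpt]
  congr 1
  rw [← Finset.add_sum_erase _ _ (Finset.mem_univ i)]
  congr 1
  · simp
  · exact Finset.sum_congr rfl fun k hk => if_neg (Finset.mem_erase.mp hk).1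

variable {m : ℕ}

lemma measure_scaling_cube [MeasurableSpace ℚ_[p]] [BorelSpace ℚ_[p]]
    (μ : Measure ℚ_[p]) [μ.IsAddHaarMeasure] [SigmaFinite μ] (hμ : μ (pZ p) = 1)
    (hm : 1 ≤ m) (i : Fin m) (σ : Equiv.Perm (Fin m)) (pv qv : Fin m → ℚ)
    (hF : Hyperbolic p i σ pv qv) (n : ℕ) (hn : 1 ≤ n)
    (a : Fin m → ℚ_[p]) (ha : ∀ j, a j ∈ pZ p) :
    (Measure.pi fun _ : Fin m => μ)
        (LFTinv p i σ pv qv '' {x | ∀ j, ‖x j - a j‖ ≤ (p : ℝ) ^ (-(n : ℤ))}) =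
      ((p : ℝ≥0∞) ^ ((m : ℤ) * padicValRat p (pv (σ⁻¹ i)) +
          ((m : ℤ) + 1) * (-padicValRat p (qv (σ⁻¹ i))) -
          ∑ t ∈ Finset.univ.erase (σ⁻¹ i), padicValRat p (pv t)))⁻¹ *
        (Measure.pi fun _ : Fin m => μ) {x | ∀ j, ‖x j - a j‖ ≤ (p : ℝ) ^ (-(n : ℤ))} := by
  classical
  have hp0 : (p : ℝ≥0∞) ≠ 0 := by
    exact_mod_cast Nat.cast_ne_zero.mpr (Fact.out : p.Prime).ne_zero
  have hpt : (p : ℝ≥0∞) ≠ ⊤ := ENNReal.natCast_ne_top p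
  rw [image_cube_eq p i σ pv qv hF n hn a ha]
  have hmeas : MeasurableSet (Set.univ.pi (fun k => if k = i
      then {t : ℚ_[p] | ‖t - (pv (σ⁻¹ i):ℚ_[p]) / (a (σ⁻¹ i) + (qv (σ⁻¹ i):ℚ_[p]))‖ ≤
          (p:ℝ) ^ (-((n:ℤ) + padicValRat p (pv (σ⁻¹ i)) + 2 * -padicValRat p (qv (σ⁻¹ i))))}
      else {t : ℚ_[p] | ‖t - 0‖ ≤ (p:ℝ) ^ (-((n:ℤ) + -padicValRat p (qv (σ⁻¹ i)) +
          padicValRat p (pv (σ⁻¹ i)) - padicValRat p (pv (σ⁻¹ k))))})) := by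
    refine MeasurableSet.univ_pi fun k => ?_
    by_cases hk : k = i
    · rw [if_pos hk]; exact measurableSet_ball p _ _
    · rw [if_neg hk]; exact measurableSet_ball p _ _
  refine Eq.trans (shear_preserving p μ hμ
    (fun k => if k = i then 0 else (a (σ⁻¹ k) + (qv (σ⁻¹ k):ℚ_[p])) / (pv (σ⁻¹ k):ℚ_[p])) i
    (if_pos rfl) _ hmeas) ?_
  refine Eq.trans (measure_pi_cylinder p μ hμ i
    ((pv (σ⁻¹ i):ℚ_[p]) / (a (σ⁻¹ i) + (qv (σ⁻¹ i):ℚ_[p])))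
    ((n:ℤ) + padicValRat p (pv (σ⁻¹ i)) + 2 * -padicValRat p (qv (σ⁻¹ i)))
    (fun k => (n:ℤ) + -padicValRat p (qv (σ⁻¹ i)) + padicValRat p (pv (σ⁻¹ i)) -
      padicValRat p (pv (σ⁻¹ k)))) ?_
  have hcube : (Measure.pi fun _ : Fin m => μ)
      {x : Fin m → ℚ_[p] | ∀ j, ‖x j - a j‖ ≤ (p:ℝ)^(-(n:ℤ))} =
      (p:ℝ≥0∞) ^ ((m:ℤ) * (1 - (n:ℤ))) := by
    have h1 : {x : Fin m → ℚ_[p] | ∀ j, ‖x j - a j‖ ≤ (p:ℝ)^(-(n:ℤ))} =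
        Set.univ.pi fun j => {t : ℚ_[p] | ‖t - a j‖ ≤ (p:ℝ)^(-(n:ℤ))} := by
      ext z; simp [Set.mem_univ_pi]
    rw [h1, Measure.pi_pi]
    refine Eq.trans (Finset.prod_congr rfl fun j _ => measure_ball_int p μ hμ _ (a j)) ?_
    rw [prod_zpow _ hp0 hpt, Finset.sum_const, Finset.card_univ, Fintype.card_fin,
      nsmul_eq_mul]
  rw [hcube, ← ENNReal.zpow_neg, ← ENNReal.zpow_add hp0 hpt]
  congr 1
  have hbij : ∑ k ∈ Finset.univ.erase i, (1 - ((n:ℤ) + -padicValRat p (qv (σ⁻¹ i)) +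
        padicValRat p (pv (σ⁻¹ i)) - padicValRat p (pv (σ⁻¹ k))))
      = ∑ t ∈ Finset.univ.erase (σ⁻¹ i), (1 - ((n:ℤ) + -padicValRat p (qv (σ⁻¹ i)) +
        padicValRat p (pv (σ⁻¹ i)) - padicValRat p (pv t))) := by
    refine Finset.sum_bij' (fun k _ => σ⁻¹ k) (fun t _ => σ t) ?_ ?_ ?_ ?_ ?_
    · intro k hk
      simp only [Finset.mem_erase, Finset.mem_univ, and_true] at hk ⊢
      exact fun h => hk (Equiv.injective σ⁻¹ h)
    · intro t ht
      simp only [Finset.mem_erase, Finset.mem_univ, and_true] at ht ⊢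
      intro h
      apply ht
      rw [← h, perm_inv_apply_self]
    · intro k hk; exact perm_apply_inv_self σ k
    · intro t ht; exact perm_inv_apply_self σ t
    · intro k hk; rfl
  rw [hbij]
  have hre : ∑ t ∈ Finset.univ.erase (σ⁻¹ i), (1 - ((n:ℤ) + -padicValRat p (qv (σ⁻¹ i)) +
        padicValRat p (pv (σ⁻¹ i)) - padicValRat p (pv t)))
      = ((m:ℤ) - 1) * (1 - ((n:ℤ) + -padicValRat p (qv (σ⁻¹ i)) +
        padicValRat p (pv (σ⁻¹ i)))) +
        ∑ t ∈ Finset.univ.erase (σ⁻¹ i), padicValRat p (pv t) := by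
    have h2 : ∀ t ∈ Finset.univ.erase (σ⁻¹ i),
        (1 - ((n:ℤ) + -padicValRat p (qv (σ⁻¹ i)) + padicValRat p (pv (σ⁻¹ i)) -
          padicValRat p (pv t)))
        = (1 - ((n:ℤ) + -padicValRat p (qv (σ⁻¹ i)) + padicValRat p (pv (σ⁻¹ i)))) +
          padicValRat p (pv t) := by
      intro t ht; ring
    rw [Finset.sum_congr rfl h2, Finset.sum_add_distrib, Finset.sum_const,
      Finset.card_erase_of_mem (Finset.mem_univ _), Finset.card_univ, Fintype.card_fin,
      nsmul_eq_mul]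
    congr 1
    push_cast [Nat.cast_sub hm]
    ring
  rw [hre]
  ring

end Part1
section Part2

variable {m : ℕ}

lemma measure_scaling_set [MeasurableSpace ℚ_[p]] [BorelSpace ℚ_[p]]
    (μ : Measure ℚ_[p]) [μ.IsAddHaarMeasure] [SigmaFinite μ] (hμ : μ (pZ p) = 1)
    (hm : 1 ≤ m) (i : Fin m) (σ : Equiv.Perm (Fin m)) (pv qv : Fin m → ℚ)
    (hF : Hyperbolic p i σ pv qv)
    (S : Set (Fin m → ℚ_[p])) (hS : MeasurableSet S) (hSP : S ⊆ {x | ∀ j, x j ∈ pZ p}) :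
    (Measure.pi fun _ : Fin m => μ) (LFTinv p i σ pv qv '' S) =
      ((p : ℝ≥0∞) ^ ((m : ℤ) * padicValRat p (pv (σ⁻¹ i)) +
          ((m : ℤ) + 1) * (-padicValRat p (qv (σ⁻¹ i))) -
          ∑ t ∈ Finset.univ.erase (σ⁻¹ i), padicValRat p (pv t)))⁻¹ *
        (Measure.pi fun _ : Fin m => μ) S := by
  classical
  set μm := (Measure.pi fun _ : Fin m => μ) with hμm
  set ι : ℝ≥0∞ := ((p : ℝ≥0∞) ^ ((m : ℤ) * padicValRat p (pv (σ⁻¹ i)) +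
      ((m : ℤ) + 1) * (-padicValRat p (qv (σ⁻¹ i))) -
      ∑ t ∈ Finset.univ.erase (σ⁻¹ i), padicValRat p (pv t)))⁻¹ with hι_def
  set P : Set (Fin m → ℚ_[p]) := {x | ∀ j, x j ∈ pZ p} with hP_def
  have hp1 : (1:ℝ) < p := one_lt_p p
  have hps0 : ∀ k, (pv k : ℚ_[p]) ≠ 0 := fun k => by
    exact_mod_cast Rat.cast_ne_zero.mpr (hF.1 k).1
  have hu0 : (0:ℤ) ≤ -padicValRat p (qv (σ⁻¹ i)) := neg_nonneg.mpr hF.2.1.2.1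
  have hQn : ‖(qv (σ⁻¹ i) : ℚ_[p])‖ = (p:ℝ) ^ (-padicValRat p (qv (σ⁻¹ i))) :=
    norm_ratCast_eq p _ hF.2.1.1
  have hdenne : ∀ y : ℚ_[p], ‖y‖ ≤ (p:ℝ)⁻¹ → y + (qv (σ⁻¹ i) : ℚ_[p]) ≠ 0 := by
    intro y hy h0
    have h1 : ‖y‖ < ‖(qv (σ⁻¹ i) : ℚ_[p])‖ := by
      rw [hQn]
      calc ‖y‖ ≤ (p:ℝ)⁻¹ := hy
        _ < 1 := inv_lt_one_of_one_lt₀ hp1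
        _ ≤ (p:ℝ) ^ (-padicValRat p (qv (σ⁻¹ i))) := by
            calc (1:ℝ) = (p:ℝ) ^ (0:ℤ) := (zpow_zero _).symm
              _ ≤ _ := zpow_le_zpow_right₀ hp1.le hu0
    have h2 : (qv (σ⁻¹ i) : ℚ_[p]) = -y := eq_neg_of_add_eq_zero_right h0
    rw [h2, norm_neg] at h1
    exact lt_irrefl _ h1
  -- P is a compact measurable cube
  have hPcube : P = Set.univ.pi fun _ : Fin m => {t : ℚ_[p] | ‖t - 0‖ ≤ (p:ℝ)⁻¹} := by
    ext z
    simp [hP_def, pZ, Set.mem_univ_pi, sub_zero]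
  have hPmeas : MeasurableSet P := by
    rw [hPcube]; exact MeasurableSet.univ_pi fun _ => measurableSet_ball p 0 _
  have hPcompact : IsCompact P := by
    rw [hPcube]; exact isCompact_univ_pi fun _ => isCompact_ball p 0 _
  -- continuity of LFTinv on P
  have hcont : ContinuousOn (LFTinv p i σ pv qv) P := by
    refine continuousOn_pi.mpr fun k => ?_
    by_cases hk : k = i
    · have he : (fun y : Fin m → ℚ_[p] => LFTinv p i σ pv qv y k) =
          fun y => (pv (σ⁻¹ i) : ℚ_[p]) / (y (σ⁻¹ i) + (qv (σ⁻¹ i):ℚ_[p])) := by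
        funext y; simp only [LFTinv, if_pos hk]
      rw [he]
      exact ContinuousOn.div continuousOn_const
        (((continuous_apply (σ⁻¹ i)).continuousOn).add continuousOn_const)
        (fun y (hy : y ∈ P) => hdenne _ (hy (σ⁻¹ i)))
    · have he : (fun y : Fin m → ℚ_[p] => LFTinv p i σ pv qv y k) =
          fun y => (pv (σ⁻¹ i) : ℚ_[p]) * (y (σ⁻¹ k) + (qv (σ⁻¹ k):ℚ_[p])) /
            ((pv (σ⁻¹ k):ℚ_[p]) * (y (σ⁻¹ i) + (qv (σ⁻¹ i):ℚ_[p]))) := by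
        funext y; simp only [LFTinv, if_neg hk]
      rw [he]
      refine ContinuousOn.div
        (by fun_prop)
        (by fun_prop) ?_
      exact fun y (hy : y ∈ P) => mul_ne_zero (hps0 _) (hdenne _ (hy (σ⁻¹ i)))
  -- injectivity on P
  have hinj : Set.InjOn (LFTinv p i σ pv qv) P := by
    intro y hy y' hy' heq
    have hysne : y (σ⁻¹ i) + (qv (σ⁻¹ i):ℚ_[p]) ≠ 0 := hdenne _ (hy (σ⁻¹ i))
    have hy'sne : y' (σ⁻¹ i) + (qv (σ⁻¹ i):ℚ_[p]) ≠ 0 := hdenne _ (hy' (σ⁻¹ i))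
    have h_i := congrFun heq i
    simp only [LFTinv, eq_self_iff_true, if_true] at h_i
    rw [div_eq_div_iff hysne hy'sne] at h_i
    have hseq : y (σ⁻¹ i) + (qv (σ⁻¹ i):ℚ_[p]) = y' (σ⁻¹ i) + (qv (σ⁻¹ i):ℚ_[p]) :=
      (mul_left_cancel₀ (hps0 (σ⁻¹ i)) h_i).symm
    funext j
    by_cases hj : j = σ⁻¹ i
    · rw [hj]; exact add_right_cancel hseq
    · have hk : σ j ≠ i := fun h => hj (by rw [← h, perm_inv_apply_self])
      have h_k := congrFun heq (σ j)
      simp only [LFTinv, if_neg hk] at h_k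
      rw [perm_inv_apply_self] at h_k
      rw [div_eq_div_iff (mul_ne_zero (hps0 j) hysne) (mul_ne_zero (hps0 j) hy'sne)] at h_k
      rw [← hseq] at h_k
      have h2 := mul_right_cancel₀ (mul_ne_zero (hps0 j) hysne) h_k
      have h3 := mul_left_cancel₀ (hps0 (σ⁻¹ i)) h2
      exact add_right_cancel h3
  -- measurable embeddings
  haveI hPc : CompactSpace P := isCompact_iff_compactSpace.mp hPcompact
  set g : P → (Fin m → ℚ_[p]) := P.restrict (LFTinv p i σ pv qv) with hg_def
  have hgc : Continuous g := hcont.restrict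
  have hginj : Function.Injective g := Set.injOn_iff_injective.mp hinj
  have hemb : MeasurableEmbedding g := (hgc.isClosedEmbedding hginj).measurableEmbedding
  have hvemb : MeasurableEmbedding (Subtype.val : P → (Fin m → ℚ_[p])) :=
    MeasurableEmbedding.subtype_coe hPmeas
  have himg : ∀ A : Set (Fin m → ℚ_[p]), g '' (Subtype.val ⁻¹' A) =
      LFTinv p i σ pv qv '' (A ∩ P) := by
    intro A
    ext z
    constructor
    · rintro ⟨⟨w, hwP⟩, hwA, rfl⟩
      exact ⟨w, ⟨hwA, hwP⟩, rfl⟩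
    · rintro ⟨w, ⟨hwA, hwP⟩, rfl⟩
      exact ⟨⟨w, hwP⟩, hwA, rfl⟩
  -- the π-system of cubes
  set C : Set (Set P) := {T | ∃ (n : ℕ) (b : Fin m → ℚ_[p]), 1 ≤ n ∧ (∀ j, b j ∈ pZ p) ∧
      T = Subtype.val ⁻¹' {x : Fin m → ℚ_[p] | ∀ j, ‖x j - b j‖ ≤ (p:ℝ) ^ (-(n:ℤ))}}
    with hC_def
  have hcubesub : ∀ (n : ℕ), 1 ≤ n → ∀ (b : Fin m → ℚ_[p]), (∀ j, b j ∈ pZ p) →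
      {x : Fin m → ℚ_[p] | ∀ j, ‖x j - b j‖ ≤ (p:ℝ) ^ (-(n:ℤ))} ⊆ P := by
    intro n hn b hb z hz j
    show ‖z j‖ ≤ (p:ℝ)⁻¹
    have h2 : ‖z j - b j‖ ≤ (p:ℝ)⁻¹ := by
      refine le_trans (hz j) ?_
      rw [← zpow_neg_one]
      exact zpow_le_zpow_right₀ hp1.le (by omega)
    calc ‖z j‖ = ‖(z j - b j) + b j‖ := by ring_nf
      _ ≤ max ‖z j - b j‖ ‖b j‖ := Padic.nonarchimedean _ _
      _ ≤ (p:ℝ)⁻¹ := max_le h2 (hb j)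
  have hcubeopen : ∀ (n : ℕ) (b : Fin m → ℚ_[p]),
      IsOpen {x : Fin m → ℚ_[p] | ∀ j, ‖x j - b j‖ ≤ (p:ℝ) ^ (-(n:ℤ))} := by
    intro n b
    have h1 : {x : Fin m → ℚ_[p] | ∀ j, ‖x j - b j‖ ≤ (p:ℝ) ^ (-(n:ℤ))} =
        Set.univ.pi fun j => {t : ℚ_[p] | ‖t - b j‖ ≤ (p:ℝ) ^ (-(n:ℤ))} := by
      ext z; simp [Set.mem_univ_pi]
    rw [h1]
    exact isOpen_set_pi Set.finite_univ fun j _ => isOpen_ball p (b j) n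
  have hbasis : TopologicalSpace.IsTopologicalBasis C := by
    refine TopologicalSpace.isTopologicalBasis_of_isOpen_of_nhds ?_ ?_
    · rintro T ⟨n, b, hn1, hb, rfl⟩
      exact (hcubeopen n b).preimage continuous_subtype_val
    · intro x U hxU hUopen
      obtain ⟨ε, hε, hball⟩ := Metric.isOpen_iff.mp hUopen x hxU
      obtain ⟨N, hN⟩ := exists_pow_lt_of_lt_one hε (inv_lt_one_of_one_lt₀ hp1)
      refine ⟨Subtype.val ⁻¹' {z : Fin m → ℚ_[p] |
          ∀ j, ‖z j - (x : Fin m → ℚ_[p]) j‖ ≤ (p:ℝ) ^ (-((N+1 : ℕ) : ℤ))},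
        ⟨N+1, (x : Fin m → ℚ_[p]), by omega, x.2, rfl⟩, ?_, ?_⟩
      · simp only [Set.mem_preimage, Set.mem_setOf_eq]
        intro j
        simp only [sub_self, norm_zero]
        positivity
      · intro z hz
        apply hball
        simp only [Metric.mem_ball]
        have hd : dist z x ≤ (p:ℝ) ^ (-((N+1 : ℕ) : ℤ)) := by
          rw [Subtype.dist_eq, (dist_pi_le_iff (by positivity))]
          intro j
          rw [dist_eq_norm]
          exact hz j
        refine lt_of_le_of_lt hd (lt_of_le_of_lt ?_ hN)
        rw [inv_pow, ← zpow_natCast (p:ℝ) N, ← zpow_neg]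
        exact zpow_le_zpow_right₀ hp1.le (by omega)
  have hgen : (inferInstance : MeasurableSpace P) = MeasurableSpace.generateFrom C := by
    rw [BorelSpace.measurable_eq (α := P), hbasis.borel_eq_generateFrom]
  have hpi : IsPiSystem C := by
    rintro T1 ⟨n1, b1, hn1, hb1, rfl⟩ T2 ⟨n2, b2, hn2, hb2, rfl⟩ hne
    obtain ⟨x, hx1, hx2⟩ := hne
    have key : ∀ (na nb : ℕ) (ba bb : Fin m → ℚ_[p]), na ≤ nb →
        (∀ j, ‖(x:Fin m → ℚ_[p]) j - ba j‖ ≤ (p:ℝ)^(-(na:ℤ))) →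
        (∀ j, ‖(x:Fin m → ℚ_[p]) j - bb j‖ ≤ (p:ℝ)^(-(nb:ℤ))) →
        {z : Fin m → ℚ_[p] | ∀ j, ‖z j - bb j‖ ≤ (p:ℝ)^(-(nb:ℤ))} ⊆
        {z : Fin m → ℚ_[p] | ∀ j, ‖z j - ba j‖ ≤ (p:ℝ)^(-(na:ℤ))} := by
      intro na nb ba bb hab hxa hxb z hz j
      have h1 : ‖z j - bb j‖ ≤ (p:ℝ)^(-(na:ℤ)) :=
        le_trans (hz j) (zpow_le_zpow_right₀ hp1.le (by omega))
      have h2 : ‖bb j - (x:Fin m → ℚ_[p]) j‖ ≤ (p:ℝ)^(-(na:ℤ)) := by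
        rw [norm_sub_rev]
        exact le_trans (hxb j) (zpow_le_zpow_right₀ hp1.le (by omega))
      have h3 := hxa j
      calc ‖z j - ba j‖ = ‖((z j - bb j) + (bb j - (x:Fin m → ℚ_[p]) j)) +
            ((x:Fin m → ℚ_[p]) j - ba j)‖ := by ring_nf
        _ ≤ max ‖(z j - bb j) + (bb j - (x:Fin m → ℚ_[p]) j)‖
            ‖(x:Fin m → ℚ_[p]) j - ba j‖ := Padic.nonarchimedean _ _
        _ ≤ (p:ℝ)^(-(na:ℤ)) :=
            max_le (le_trans (Padic.nonarchimedean _ _) (max_le h1 h2)) h3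
    rcases le_total n1 n2 with h12 | h21
    · refine ⟨n2, b2, hn2, hb2, ?_⟩
      rw [Set.inter_eq_self_of_subset_right
        (Set.preimage_mono (key n1 n2 b1 b2 h12 (fun j => hx1 j) (fun j => hx2 j)))]
    · refine ⟨n1, b1, hn1, hb1, ?_⟩
      rw [Set.inter_eq_self_of_subset_left
        (Set.preimage_mono (key n2 n1 b2 b1 h21 (fun j => hx2 j) (fun j => hx1 j)))]
  -- the two measures
  set ν₁ : Measure P := Measure.comap g μm with hν₁
  set ν₂ : Measure P := ι • Measure.comap Subtype.val μm with hν₂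
  haveI hν₁fin : IsFiniteMeasure ν₁ := by
    constructor
    rw [hν₁, hemb.comap_apply, Set.image_univ]
    exact (isCompact_range hgc).measure_lt_top
  have hagree : ∀ T ∈ C, ν₁ T = ν₂ T := by
    rintro T ⟨n, b, hn1, hb, rfl⟩
    have hsub := hcubesub n hn1 b hb
    rw [hν₁, hν₂, hemb.comap_apply, Measure.smul_apply, hvemb.comap_apply, himg,
      Set.inter_eq_self_of_subset_left hsub, Subtype.image_preimage_coe,
      Set.inter_eq_self_of_subset_right hsub, smul_eq_mul]
    exact measure_scaling_cube p μ hμ hm i σ pv qv hF n hn1 b hb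
  have hunivC : (Set.univ : Set P) ∈ C := by
    refine ⟨1, 0, le_refl 1, fun j => ?_, ?_⟩
    · show ‖(0 : Fin m → ℚ_[p]) j‖ ≤ (p:ℝ)⁻¹
      simp only [Pi.zero_apply, norm_zero]
      positivity
    · ext x
      simp only [Set.mem_univ, true_iff, Set.mem_preimage, Set.mem_setOf_eq]
      intro j
      have hx : ‖(x : Fin m → ℚ_[p]) j‖ ≤ (p:ℝ)⁻¹ := x.2 j
      simp only [Pi.zero_apply, sub_zero]
      calc ‖(x : Fin m → ℚ_[p]) j‖ ≤ (p:ℝ)⁻¹ := hx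
        _ = (p:ℝ) ^ (-((1:ℕ):ℤ)) := by rw [Nat.cast_one, zpow_neg_one]
  have hext : ν₁ = ν₂ := by
    refine ext_of_generate_finite C hgen hpi hagree ?_
    exact hagree _ hunivC
  -- conclusion
  have hSimg : LFTinv p i σ pv qv '' S = g '' (Subtype.val ⁻¹' S) := by
    rw [himg, Set.inter_eq_self_of_subset_left hSP]
  calc μm (LFTinv p i σ pv qv '' S) = ν₁ (Subtype.val ⁻¹' S) := by
        rw [hSimg, hν₁, hemb.comap_apply]
    _ = ν₂ (Subtype.val ⁻¹' S) := by rw [hext]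
    _ = ι * μm S := by
        rw [hν₂, Measure.smul_apply, hvemb.comap_apply, Subtype.image_preimage_coe,
          Set.inter_eq_self_of_subset_right hSP, smul_eq_mul]

end Part2

theorem measure_scaling (m : ℕ) (hm : 1 ≤ m) [MeasurableSpace ℚ_[p]] [BorelSpace ℚ_[p]]
    (μ : Measure ℚ_[p]) [μ.IsAddHaarMeasure] [SigmaFinite μ] (hμ : μ (pZ p) = 1)
    (i : Fin m) (σ : Equiv.Perm (Fin m)) (pv qv : Fin m → ℚ)
    (hF : Hyperbolic p i σ pv qv) :
    (∀ n : ℕ, 1 ≤ n → ∀ a : Fin m → ℚ_[p], (∀ j, a j ∈ pZ p) →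
      (Measure.pi fun _ : Fin m => μ)
          (LFTinv p i σ pv qv '' {x | ∀ j, ‖x j - a j‖ ≤ (p : ℝ) ^ (-(n : ℤ))}) =
        ((p : ℝ≥0∞) ^ ((m : ℤ) * padicValRat p (pv (σ⁻¹ i)) +
            ((m : ℤ) + 1) * (-padicValRat p (qv (σ⁻¹ i))) -
            ∑ t ∈ Finset.univ.erase (σ⁻¹ i), padicValRat p (pv t)))⁻¹ *
          (Measure.pi fun _ : Fin m => μ) {x | ∀ j, ‖x j - a j‖ ≤ (p : ℝ) ^ (-(n : ℤ))}) ∧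
    (∀ S : Set (Fin m → ℚ_[p]), MeasurableSet S → S ⊆ {x | ∀ j, x j ∈ pZ p} →
      (Measure.pi fun _ : Fin m => μ) (LFTinv p i σ pv qv '' S) =
        ((p : ℝ≥0∞) ^ ((m : ℤ) * padicValRat p (pv (σ⁻¹ i)) +
            ((m : ℤ) + 1) * (-padicValRat p (qv (σ⁻¹ i))) -
            ∑ t ∈ Finset.univ.erase (σ⁻¹ i), padicValRat p (pv t)))⁻¹ *
          (Measure.pi fun _ : Fin m => μ) S) := by
  refine ⟨fun n hn a ha => measure_scaling_cube p μ hμ hm i σ pv qv hF n hn a ha,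
    fun S hS hSP => measure_scaling_set p μ hμ hm i σ pv qv hF S hS hSP⟩

end PadicCF
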